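/- Let F ∈ ℂ[x₀,…,x₄] be a nonzero homogeneous polynomial of degree n ≥ 2 defining a nodal hypersurface V(F) ⊂ ℙ⁴. Then every line in ℙ⁴ contains at most n−1 nodes of V(F). (This is the case k = 1 of the paper's Lemma stating that a curve of degree k in ℙ⁴ contains at most k(n−1) nodes.) -/

import Mathlib

open MvPolynomial AlgebraicGeometry

noncomputable section

/-- Points of `ℙ⁴` over `ℂ`, identified with classes of nonzero vectors of `ℂ⁵`. -/
abbrev P4 := Projectivization ℂ (Fin 5 → ℂ)

/-- `p` is a singular point of the hypersurface `V(F) ⊂ ℙ⁴`: all partial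
derivatives of `F` vanish at (a representative of) `p`. -/
def PSing (F : MvPolynomial (Fin 5) ℂ) (p : P4) : Prop :=
  ∀ i : Fin 5, eval p.rep (pderiv i F) = 0

/-- `p` is a node of `V(F)`: it is singular and the Hessian matrix has rank `4`. -/
def PNode (F : MvPolynomial (Fin 5) ℂ) (p : P4) : Prop :=
  PSing F p ∧
    Matrix.rank (Matrix.of fun i j : Fin 5 => eval p.rep (pderiv i (pderiv j F))) = 4

/-- `V(F)` is a nodal hypersurface: every singular point is a node. -/
def IsNodal (F : MvPolynomial (Fin 5) ℂ) : Prop :=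
  ∀ p : P4, PSing F p → PNode F p

/-- `V(F)` has at most `k` nodes (for a nodal `V(F)` the nodes are exactly the
singular points): any finite set of singular points has cardinality at most `k`. -/
def AtMostNodes (F : MvPolynomial (Fin 5) ℂ) (k : ℕ) : Prop :=
  ∀ T : Finset P4, (∀ p ∈ T, PSing F p) → T.card ≤ k

section aux

lemma my_eval_aeval (P : MvPolynomial (Fin 5) ℂ) (L : Fin 5 → Polynomial ℂ) (t : ℂ) :
    Polynomial.eval t (aeval L P) = eval (fun j => Polynomial.eval t (L j)) P := by
  have h := MvPolynomial.eval₂_comp_left (Polynomial.evalRingHom t)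
      (algebraMap ℂ (Polynomial ℂ)) L P
  rw [MvPolynomial.aeval_def]
  have h2 : (Polynomial.evalRingHom t).comp (algebraMap ℂ (Polynomial ℂ)) = RingHom.id ℂ := by
    ext a; simp
  rw [show (Polynomial.eval t (eval₂ (algebraMap ℂ (Polynomial ℂ)) L P)) =
      (Polynomial.evalRingHom t) (eval₂ (algebraMap ℂ (Polynomial ℂ)) L P) from rfl, h, h2]
  rfl

lemma my_coeff_one (v w : Fin 5 → ℂ) (P : MvPolynomial (Fin 5) ℂ) :
    (aeval (fun j => Polynomial.C (v j) + Polynomial.X * Polynomial.C (w j)) P).coeff 1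
      = ∑ j, w j * eval v (pderiv j P) := by
  set L : Fin 5 → Polynomial ℂ := fun j => Polynomial.C (v j) + Polynomial.X * Polynomial.C (w j)
    with hL
  induction P using MvPolynomial.induction_on with
  | C a => simp [hL]
  | add p q hp hq =>
      simp only [map_add, Polynomial.coeff_add, hp, hq, ← Finset.sum_add_distrib]
      congr 1; funext j; ring
  | mul_X p i hp =>
      have hc0 : (aeval L p).coeff 0 = eval v p := by
        rw [Polynomial.coeff_zero_eq_eval_zero, my_eval_aeval]
        have : (fun j => Polynomial.eval 0 (L j)) = v := by funext j; simp [hL]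
        rw [this]
      have key : (aeval L (p * X i)).coeff 1
          = (aeval L p).coeff 1 * v i + (aeval L p).coeff 0 * w i := by
        rw [map_mul, aeval_X]
        show ((aeval L p) * (Polynomial.C (v i) + Polynomial.X * Polynomial.C (w i))).coeff 1 = _
        rw [mul_add, Polynomial.coeff_add, Polynomial.coeff_mul_C, ← mul_assoc,
          Polynomial.coeff_mul_C, Polynomial.coeff_mul_X]
      rw [key, hp, hc0]
      rw [Finset.sum_mul]
      have : ∀ j : Fin 5, w j * eval v (pderiv j (p * X i))
          = w j * eval v (pderiv j p) * v i + (if j = i then eval v p * w i else 0) := by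
        intro j
        rw [pderiv_mul]
        by_cases h : j = i
        · subst h; simp [pderiv_X_self]; ring
        · simp [pderiv_X_of_ne (Ne.symm h), h, eval_X]; ring
      rw [Finset.sum_congr rfl fun j _ => this j, Finset.sum_add_distrib,
        Finset.sum_ite_eq' Finset.univ i]
      simp

lemma my_homog_pderiv {φ : MvPolynomial (Fin 5) ℂ} {n : ℕ} (h : φ.IsHomogeneous n) (i : Fin 5) :
    (pderiv i φ).IsHomogeneous (n - 1) := by
  rw [φ.as_sum, map_sum]
  apply IsHomogeneous.sum
  intro d hd
  rw [pderiv_monomial]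
  by_cases hdi : d i = 0
  · simp [hdi]
    exact isHomogeneous_zero _ _ _
  · apply isHomogeneous_monomial
    have hdeg : d.degree = n := by
      have := h (mem_support_iff.mp hd)
      rw [Finsupp.degree_eq_weight_one]; exact this
    have hle : Finsupp.single i 1 ≤ d := by
      rw [Finsupp.single_le_iff]
      omega
    have heq : (d - Finsupp.single i 1) + Finsupp.single i 1 = d := tsub_add_cancel_of_le hle
    have hsingle : (Finsupp.single i 1 : Fin 5 →₀ ℕ).degree = 1 := by
      exact Finsupp.degree_single i 1
    have hdeg2 : (d - Finsupp.single i 1).degree + 1 = n := by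
      have h3 := congrArg Finsupp.degree heq
      rw [Finsupp.degree_eq_weight_one] at h3 hdeg hsingle ⊢
      rw [map_add, hdeg, hsingle] at h3
      omega
    omega

lemma my_eval_smul {φ : MvPolynomial (Fin 5) ℂ} {m : ℕ} (h : φ.IsHomogeneous m) (c : ℂ)
    (x : Fin 5 → ℂ) : eval (c • x) φ = c ^ m * eval x φ := by
  rw [eval_eq, eval_eq, Finset.mul_sum]
  apply Finset.sum_congr rfl
  intro d hd
  have hdeg : d.degree = m := by
    have := h (mem_support_iff.mp hd)
    rw [Finsupp.degree_eq_weight_one]; exact this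
  have : ∏ i ∈ d.support, (c • x) i ^ d i
      = c ^ m * ∏ i ∈ d.support, x i ^ d i := by
    simp only [Pi.smul_apply, smul_eq_mul, mul_pow, Finset.prod_mul_distrib]
    rw [Finset.prod_pow_eq_pow_sum]
    rw [show ∑ i ∈ d.support, d i = m from hdeg]
  rw [this]; ring

/-- If every partial derivative of a nodal `F` vanished identically on the plane `W`,
the Hessian at a point of the line would have rank `≤ 3`. -/
lemma exists_partial_ne_zero
    (F : MvPolynomial (Fin 5) ℂ) (hnodal : IsNodal F)
    (W : Submodule ℂ (Fin 5 → ℂ)) (hW : Module.finrank ℂ W = 2) :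
    ∃ i : Fin 5, ∃ x ∈ W, eval x (pderiv i F) ≠ 0 := by
  by_contra hc
  push_neg at hc
  have hWbot : W ≠ ⊥ := by
    intro h; rw [h, finrank_bot] at hW; omega
  obtain ⟨u, huW, hu⟩ := Submodule.exists_mem_ne_zero_of_ne_bot hWbot
  set p : P4 := Projectivization.mk ℂ u hu with hp
  have hrep : p.rep ∈ W := by
    obtain ⟨a, ha⟩ := (Projectivization.mk_eq_mk_iff ℂ _ _ p.rep_nonzero hu).mp
      (Projectivization.mk_rep p)
    rw [← ha]
    exact W.smul_mem _ huW
  have hsing : PSing F p := fun i => hc i p.rep hrep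
  obtain ⟨-, hrank⟩ := hnodal p hsing
  set v := p.rep with hv
  set M : Matrix (Fin 5) (Fin 5) ℂ :=
    Matrix.of fun i j : Fin 5 => eval v (pderiv i (pderiv j F)) with hM
  have hv0 : v ≠ 0 := p.rep_nonzero
  -- find w ∈ W independent from v
  have hwex : ∃ w ∈ W, w ∉ Submodule.span ℂ {v} := by
    by_contra hall
    push_neg at hall
    have hle : W ≤ Submodule.span ℂ {v} := fun x hx => hall x hx
    have := Submodule.finrank_mono hle
    rw [hW, finrank_span_singleton hv0] at this
    omega
  obtain ⟨w, hwW, hw⟩ := hwex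
  -- kernel membership
  have hker : ∀ x ∈ W, M.transpose.mulVecLin x = 0 := by
    intro x hxW
    funext i
    have hpoly : aeval (fun j => Polynomial.C (v j) + Polynomial.X * Polynomial.C (x j))
        (pderiv i F) = 0 := by
      apply Polynomial.funext
      intro t
      rw [my_eval_aeval, Polynomial.eval_zero]
      have : (fun j => Polynomial.eval t
          (Polynomial.C (v j) + Polynomial.X * Polynomial.C (x j))) = v + t • x := by
        funext j
        simp only [Polynomial.eval_add, Polynomial.eval_mul, Polynomial.eval_C, Polynomial.eval_X,
          Pi.add_apply, Pi.smul_apply, smul_eq_mul]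
      rw [this]
      exact hc i _ (W.add_mem hrep (W.smul_mem t hxW))
    have h1 : ∑ j, x j * eval v (pderiv j (pderiv i F)) = 0 := by
      rw [← my_coeff_one v x (pderiv i F), hpoly, Polynomial.coeff_zero]
    show (M.transpose.mulVec x) i = (0 : Fin 5 → ℂ) i
    simp only [Matrix.mulVec, dotProduct, Matrix.transpose_apply, hM, Matrix.of_apply,
      Pi.zero_apply]
    rw [← h1]
    exact Finset.sum_congr rfl fun j _ => mul_comm _ _
  have hindep : LinearIndependent ℂ ![w, v] := by
    rw [linearIndependent_fin2]
    refine ⟨hv0, fun a ha => hw ?_⟩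
    simp only [Matrix.cons_val_one, Matrix.head_cons, Matrix.cons_val_zero] at ha
    rw [← ha]
    exact Submodule.smul_mem _ a (Submodule.mem_span_singleton_self v)
  have hrange : Set.range ![w, v] = {w, v} := by
    ext y
    simp only [Set.mem_range, Fin.exists_fin_two, Matrix.cons_val_zero, Matrix.cons_val_one,
      Matrix.head_cons, Set.mem_insert_iff, Set.mem_singleton_iff]
    constructor
    · rintro (rfl | rfl) <;> simp
    · rintro (rfl | rfl) <;> simp
  have hspan2 : Module.finrank ℂ (Submodule.span ℂ ({w, v} : Set (Fin 5 → ℂ))) = 2 := by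
    rw [← hrange, finrank_span_eq_card hindep]
    simp
  have hle : Submodule.span ℂ ({w, v} : Set (Fin 5 → ℂ)) ≤ LinearMap.ker M.transpose.mulVecLin := by
    rw [Submodule.span_le]
    rintro y hy
    simp only [Set.mem_insert_iff, Set.mem_singleton_iff] at hy
    rcases hy with rfl | rfl
    · exact LinearMap.mem_ker.mpr (hker _ hwW)
    · exact LinearMap.mem_ker.mpr (hker _ hrep)
  have h2 : 2 ≤ Module.finrank ℂ (LinearMap.ker M.transpose.mulVecLin) := by
    rw [← hspan2]
    exact Submodule.finrank_mono hle
  have h5 := LinearMap.finrank_range_add_finrank_ker (M.transpose.mulVecLin)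
  have hfr : Module.finrank ℂ (Fin 5 → ℂ) = 5 := by simp
  have hrT : Module.finrank ℂ (LinearMap.range M.transpose.mulVecLin) = 4 := by
    have h6 : M.transpose.rank = M.rank := Matrix.rank_transpose M
    rw [hrank] at h6
    exact h6
  rw [hfr, hrT] at h5
  omega

end aux

/-- A line in `ℙ⁴` contains at most `n − 1` nodes of a nodal hypersurface `V(F)`
of degree `n ≥ 2`. -/
theorem line_contains_at_most_nodes
    (n : ℕ) (hn : 2 ≤ n)
    (F : MvPolynomial (Fin 5) ℂ) (hF : F ≠ 0) (hhom : F.IsHomogeneous n)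
    (hnodal : IsNodal F)
    (W : Submodule ℂ (Fin 5 → ℂ)) (hW : Module.finrank ℂ W = 2) :
    ∀ T : Finset P4, (∀ p ∈ T, PSing F p ∧ p.rep ∈ W) → T.card ≤ n - 1 := by
  intro T hT
  obtain ⟨i₀, x₀, hx₀W, hx₀⟩ := exists_partial_ne_zero F hnodal W hW
  set G := pderiv i₀ F with hG
  have hGhom : G.IsHomogeneous (n - 1) := my_homog_pderiv hhom i₀
  have hx₀0 : x₀ ≠ 0 := by
    intro h
    subst h
    apply hx₀
    have h2 := my_eval_smul hGhom 0 0
    rw [smul_zero] at h2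
    rw [h2, zero_pow (by omega : n - 1 ≠ 0), zero_mul]
  -- pick e₁ ∈ W independent from x₀
  have he₁ex : ∃ e₁ ∈ W, e₁ ∉ Submodule.span ℂ {x₀} := by
    by_contra hall
    push_neg at hall
    have hle : W ≤ Submodule.span ℂ {x₀} := fun x hx => hall x hx
    have := Submodule.finrank_mono hle
    rw [hW, finrank_span_singleton hx₀0] at this
    omega
  obtain ⟨e₁, he₁W, he₁⟩ := he₁ex
  have hindep : LinearIndependent ℂ ![e₁, x₀] := by
    rw [linearIndependent_fin2]
    refine ⟨hx₀0, fun a ha => he₁ ?_⟩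
    simp only [Matrix.cons_val_one, Matrix.head_cons, Matrix.cons_val_zero] at ha
    rw [← ha]
    exact Submodule.smul_mem _ a (Submodule.mem_span_singleton_self x₀)
  have hspaneq : Submodule.span ℂ ({e₁, x₀} : Set (Fin 5 → ℂ)) = W := by
    apply Submodule.eq_of_le_of_finrank_le
    · rw [Submodule.span_le]
      rintro y hy
      simp only [Set.mem_insert_iff, Set.mem_singleton_iff] at hy
      rcases hy with rfl | rfl
      · exact he₁W
      · exact hx₀W
    · rw [hW]
      have hrange : Set.range ![e₁, x₀] = {e₁, x₀} := by
        ext y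
        simp only [Set.mem_range, Fin.exists_fin_two, Matrix.cons_val_zero, Matrix.cons_val_one,
          Matrix.head_cons, Set.mem_insert_iff, Set.mem_singleton_iff]
        constructor
        · rintro (rfl | rfl) <;> simp
        · rintro (rfl | rfl) <;> simp
      rw [show (2:ℕ) = Fintype.card (Fin 2) by simp, ← finrank_span_eq_card hindep, hrange]
  set q : Polynomial ℂ :=
    aeval (fun j => Polynomial.C (e₁ j) + Polynomial.X * Polynomial.C (x₀ j)) G with hq
  have hqeval : ∀ t : ℂ, q.eval t = eval (e₁ + t • x₀) G := by
    intro t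
    rw [hq, my_eval_aeval]
    have : (fun j => Polynomial.eval t (Polynomial.C (e₁ j) + Polynomial.X * Polynomial.C (x₀ j)))
        = e₁ + t • x₀ := by
      funext j
      simp only [Polynomial.eval_add, Polynomial.eval_mul, Polynomial.eval_C, Polynomial.eval_X,
        Pi.add_apply, Pi.smul_apply, smul_eq_mul]
    rw [this]
  have hG0 : G ≠ 0 := fun h => hx₀ (by rw [h, map_zero])
  have hGdeg : G.totalDegree = n - 1 := hGhom.totalDegree hG0
  have hqdeg : q.natDegree ≤ n - 1 := by
    have hbnd : ∀ j : Fin 5,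
        (Polynomial.C (e₁ j) + Polynomial.X * Polynomial.C (x₀ j)).natDegree ≤ 1 := by
      intro j
      apply le_trans (Polynomial.natDegree_add_le _ _)
      simp only [Polynomial.natDegree_C, zero_le, sup_le_iff, true_and]
      apply le_trans Polynomial.natDegree_mul_le
      simp
    have := MvPolynomial.aeval_natDegree_le (n := 1) G (le_of_eq hGdeg)
      (fun j => Polynomial.C (e₁ j) + Polynomial.X * Polynomial.C (x₀ j)) hbnd
    rwa [mul_one] at this
  have hq0 : q ≠ 0 := by
    intro hq0
    -- then G vanishes on e₁ + t x₀ for all t; show G x₀ = 0, contradiction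
    set r : Polynomial ℂ :=
      aeval (fun j => Polynomial.X * Polynomial.C (e₁ j) + Polynomial.C (x₀ j)) G with hr
    have hreval : ∀ s : ℂ, r.eval s = eval (s • e₁ + x₀) G := by
      intro s
      rw [hr, my_eval_aeval]
      have : (fun j => Polynomial.eval s (Polynomial.X * Polynomial.C (e₁ j) + Polynomial.C (x₀ j)))
          = s • e₁ + x₀ := by
        funext j
        simp only [Polynomial.eval_add, Polynomial.eval_mul, Polynomial.eval_C, Polynomial.eval_X,
          Pi.add_apply, Pi.smul_apply, smul_eq_mul]
      rw [this]
    have hrzero : ∀ s : ℂ, s ≠ 0 → r.eval s = 0 := by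
      intro s hs
      rw [hreval]
      have : s • e₁ + x₀ = s • (e₁ + s⁻¹ • x₀) := by
        rw [smul_add, smul_smul, mul_inv_cancel₀ hs, one_smul]
      rw [this, my_eval_smul hGhom, ← hqeval, hq0, Polynomial.eval_zero, mul_zero]
    have hr0 : r = 0 := by
      by_contra hr0
      have hfin := Polynomial.finite_setOf_isRoot hr0
      have : ({s : ℂ | s ≠ 0} : Set ℂ) ⊆ {s | r.IsRoot s} := fun s hs => hrzero s hs
      have hinf : ({s : ℂ | s ≠ 0} : Set ℂ).Infinite := Set.infinite_of_finite_compl (by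
        simp [Set.compl_setOf])
      exact hinf (hfin.subset this)
    apply hx₀
    have := hreval 0
    rw [hr0, Polynomial.eval_zero, zero_smul, zero_add] at this
    exact this.symm
  -- the injective map into roots of q
  classical
  set f : P4 → ℂ := fun p =>
    if h : ∃ a b : ℂ, a • e₁ + b • x₀ = p.rep then h.choose_spec.choose / h.choose else 0
    with hf
  have hcoords : ∀ p ∈ T, ∃ a b : ℂ, a • e₁ + b • x₀ = p.rep := by
    intro p hp
    have := (hT p hp).2
    rw [← hspaneq] at this
    exact Submodule.mem_span_pair.mp this
  have hane : ∀ p ∈ T, ∀ a b : ℂ, a • e₁ + b • x₀ = p.rep → a ≠ 0 := by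
    intro p hp a b hab ha
    rw [ha, zero_smul, zero_add] at hab
    have hb : b ≠ 0 := by
      intro hb; rw [hb, zero_smul] at hab; exact p.rep_nonzero hab.symm
    have hGrep : eval p.rep G = 0 := (hT p hp).1 i₀
    rw [← hab, my_eval_smul hGhom] at hGrep
    rcases mul_eq_zero.mp hGrep with h | h
    · exact pow_ne_zero _ hb h
    · exact hx₀ h
  have hroot : ∀ p ∈ T, q.eval (f p) = 0 := by
    intro p hp
    have h := hcoords p hp
    rw [hf]
    simp only [dif_pos h]
    set a := h.choose
    set b := h.choose_spec.choose
    have hab : a • e₁ + b • x₀ = p.rep := h.choose_spec.choose_spec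
    have ha : a ≠ 0 := hane p hp a b hab
    have hGrep : eval p.rep G = 0 := (hT p hp).1 i₀
    have hrepeq : p.rep = a • (e₁ + (b / a) • x₀) := by
      rw [smul_add, smul_smul, mul_div_cancel₀ _ ha, ← hab]
    rw [hrepeq, my_eval_smul hGhom, ← hqeval] at hGrep
    rcases mul_eq_zero.mp hGrep with h' | h'
    · exact absurd h' (pow_ne_zero _ ha)
    · exact h'
  have hinj : Set.InjOn f T := by
    intro p hp p' hp' hfpp'
    obtain h := hcoords p hp
    obtain h' := hcoords p' hp'
    have hfp : f p = h.choose_spec.choose / h.choose := by rw [hf]; simp only [dif_pos h]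
    have hfp' : f p' = h'.choose_spec.choose / h'.choose := by rw [hf]; simp only [dif_pos h']
    set a := h.choose; set b := h.choose_spec.choose
    set a' := h'.choose; set b' := h'.choose_spec.choose
    have hab : a • e₁ + b • x₀ = p.rep := h.choose_spec.choose_spec
    have hab' : a' • e₁ + b' • x₀ = p'.rep := h'.choose_spec.choose_spec
    have ha : a ≠ 0 := hane p hp a b hab
    have ha' : a' ≠ 0 := hane p' hp' a' b' hab'
    have hbb : b / a = b' / a' := by rw [← hfp, ← hfp', hfpp']
    have hb2 : a / a' * b' = b := by
      field_simp at hbb ⊢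
      linear_combination hbb.symm
    have hrepeq : p.rep = (a / a') • p'.rep := by
      rw [← hab, ← hab', smul_add, smul_smul, smul_smul, div_mul_cancel₀ _ ha', hb2]
    have : Projectivization.mk ℂ p.rep p.rep_nonzero
        = Projectivization.mk ℂ p'.rep p'.rep_nonzero := by
      rw [Projectivization.mk_eq_mk_iff]
      refine ⟨Units.mk0 (a / a') (div_ne_zero ha ha'), ?_⟩
      rw [Units.smul_def, Units.val_mk0]
      exact hrepeq.symm
    rwa [Projectivization.mk_rep, Projectivization.mk_rep] at this
  calc T.card ≤ q.roots.toFinset.card := by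
        apply Finset.card_le_card_of_injOn f (fun p hp => ?_) hinj
        rw [Finset.mem_coe, Multiset.mem_toFinset, Polynomial.mem_roots hq0]
        exact hroot p hp
    _ ≤ Multiset.card q.roots := q.roots.toFinset_card_le
    _ ≤ q.natDegree := q.card_roots'
    _ ≤ n - 1 := hqdeg
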